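/- Let C ≥ 2, K ≥ 1, let π be the uniform probability vector on Fin C (π_i = 1/C for all i), let γ ∈ (0,1), and let q be the symmetric-noise corruption matrix: q_i(i) = 1 − γ and q_j(i) = γ/(C−1) for all j ≠ i. Set a(i) := ∑_u q_u(i) π_u. Let A : Fin C × Fin C × (Fin K → Fin C) → ℝ be arbitrary, define the clean risk ℛ := ∑_{u} ∑_{v : Fin K → Fin C} π_u (∏_{k=1}^K π_{v_k}) A(u, u, v), the additional risk Δℛ := ∑_{u, u⁺} ∑_{v : Fin K → Fin C} π_u π_{u⁺} (∏_{k=1}^K π_{v_k}) A(u, u⁺, v), and the noisy risk ℛ̃ := ∑_{i} ∑_{j : Fin K → Fin C} a(i) (∏_{k=1}^K a(j_k)) Ã(i, i, j), where Ã(i, i⁺, j) := (a(i) a(i⁺) ∏_k a(j_k))⁻¹ ∑_{u, u⁺, v} q_u(i) π_u · q_{u⁺}(i⁺) π_{u⁺} · (∏_k q_{v_k}(j_k) π_{v_k}) · A(u, u⁺, v). Then ℛ̃ = (1 − Cγ/(C−1))² · ℛ + (Cγ/(C−1)) · (2 − Cγ/(C−1)) · Δℛ. -/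

import Mathlib

/-- Theorem 1 (risk consistency under symmetric label noise): under uniform class
priors and symmetric noise with rate γ, the noisy contrastive risk is a linear
combination of the clean risk and the additional risk. -/
theorem noisy_risk_symmetric_noise
    (C K : ℕ) (hC : 2 ≤ C) (hK : 1 ≤ K)
    (γ : ℝ) (hγ : γ ∈ Set.Ioo (0 : ℝ) 1)
    (π : Fin C → ℝ) (hπ : ∀ i, π i = 1 / (C : ℝ))
    (q : Fin C → Fin C → ℝ)
    (hq_diag : ∀ i, q i i = 1 - γ)
    (hq_off : ∀ j i, j ≠ i → q j i = γ / ((C : ℝ) - 1))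
    (a : Fin C → ℝ) (ha : ∀ i, a i = ∑ u, q u i * π u)
    (A : Fin C → Fin C → (Fin K → Fin C) → ℝ)
    (Atil : Fin C → Fin C → (Fin K → Fin C) → ℝ)
    (hAtil : ∀ (i ip : Fin C) (j : Fin K → Fin C),
      Atil i ip j = (a i * a ip * ∏ k, a (j k))⁻¹ *
        ∑ u, ∑ up, ∑ v : Fin K → Fin C,
          q u i * π u * (q up ip * π up) * (∏ k, q (v k) (j k) * π (v k)) * A u up v)
    (R ΔR Rtil : ℝ)
    (hR : R = ∑ u, ∑ v : Fin K → Fin C, π u * (∏ k, π (v k)) * A u u v)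
    (hΔR : ΔR = ∑ u, ∑ up, ∑ v : Fin K → Fin C,
      π u * π up * (∏ k, π (v k)) * A u up v)
    (hRtil : Rtil = ∑ i, ∑ j : Fin K → Fin C, a i * (∏ k, a (j k)) * Atil i i j) :
    Rtil = (1 - (C : ℝ) * γ / ((C : ℝ) - 1)) ^ 2 * R
      + ((C : ℝ) * γ / ((C : ℝ) - 1)) * (2 - (C : ℝ) * γ / ((C : ℝ) - 1)) * ΔR := by
  classical
  obtain ⟨hγ0, hγ1⟩ := hγ
  have hC2 : (2:ℝ) ≤ (C:ℝ) := by exact_mod_cast hC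
  have hCne : (C:ℝ) ≠ 0 := by linarith
  have hC1ne : (C:ℝ) - 1 ≠ 0 := by linarith
  have hcast1 : ((C - 1 : ℕ) : ℝ) = (C:ℝ) - 1 := by
    push_cast [Nat.cast_sub (by omega : 1 ≤ C)]; ring
  have hcast2 : ((C - 1 - 1 : ℕ) : ℝ) = (C:ℝ) - 2 := by
    push_cast [Nat.cast_sub (by omega : 1 ≤ C - 1), Nat.cast_sub (by omega : 1 ≤ C)]; ring
  -- row sums of q are 1
  have hrow : ∀ u : Fin C, ∑ i, q u i = 1 := by
    intro u
    rw [← Finset.add_sum_erase _ _ (Finset.mem_univ u), hq_diag]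
    rw [Finset.sum_congr rfl (fun i hi => hq_off u i (Finset.ne_of_mem_erase hi).symm)]
    rw [Finset.sum_const, Finset.card_erase_of_mem (Finset.mem_univ u), Finset.card_univ,
      Fintype.card_fin, nsmul_eq_mul, hcast1]
    field_simp
    ring
  -- column sums of q are 1
  have hcol : ∀ i : Fin C, ∑ u, q u i = 1 := by
    intro i
    rw [← Finset.add_sum_erase _ _ (Finset.mem_univ i), hq_diag]
    rw [Finset.sum_congr rfl (fun u hu => hq_off u i (Finset.ne_of_mem_erase hu))]
    rw [Finset.sum_const, Finset.card_erase_of_mem (Finset.mem_univ i), Finset.card_univ,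
      Fintype.card_fin, nsmul_eq_mul, hcast1]
    field_simp
    ring
  -- noisy prior is uniform
  have ha' : ∀ i, a i = 1 / (C:ℝ) := by
    intro i
    rw [ha]
    calc ∑ u, q u i * π u = ∑ u, q u i * (1/(C:ℝ)) :=
          Finset.sum_congr rfl fun u _ => by rw [hπ]
      _ = (∑ u, q u i) * (1/(C:ℝ)) := by rw [Finset.sum_mul]
      _ = 1 / (C:ℝ) := by rw [hcol i, one_mul]
  -- the j-sum of the product collapses
  have hJ : ∀ v : Fin K → Fin C,
      (∑ j : Fin K → Fin C, ∏ k, q (v k) (j k) * π (v k)) = ∏ k, π (v k) := by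
    intro v
    have h1 := Finset.prod_univ_sum (fun _ : Fin K => (Finset.univ : Finset (Fin C)))
      (fun k m => q (v k) m * π (v k))
    rw [Fintype.piFinset_univ] at h1
    rw [← h1]
    refine Finset.prod_congr rfl fun k _ => ?_
    rw [← Finset.sum_mul, hrow (v k), one_mul]
  -- Step 1: cancel the a-factors in Rtil
  have hRtil' : Rtil = (C:ℝ) * ∑ i, ∑ j : Fin K → Fin C, ∑ u, ∑ up, ∑ v : Fin K → Fin C,
      q u i * π u * (q up i * π up) * (∏ k, q (v k) (j k) * π (v k)) * A u up v := by
    rw [hRtil, Finset.mul_sum]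
    refine Finset.sum_congr rfl fun i _ => ?_
    rw [Finset.mul_sum]
    refine Finset.sum_congr rfl fun j _ => ?_
    rw [hAtil, ha' i]
    have hp : (∏ k, a (j k)) = (1/(C:ℝ))^K := by
      rw [Finset.prod_congr rfl fun k _ => ha' (j k), Finset.prod_const, Finset.card_univ,
        Fintype.card_fin]
    rw [hp]
    have hpne : (1/(C:ℝ))^K ≠ 0 := pow_ne_zero _ (one_div_ne_zero hCne)
    field_simp
  -- Step 2: interchange the sums
  have hswap : (∑ i, ∑ j : Fin K → Fin C, ∑ u, ∑ up, ∑ v : Fin K → Fin C,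
      q u i * π u * (q up i * π up) * (∏ k, q (v k) (j k) * π (v k)) * A u up v)
      = ∑ u, ∑ up, ∑ v : Fin K → Fin C, ∑ i, ∑ j : Fin K → Fin C,
      q u i * π u * (q up i * π up) * (∏ k, q (v k) (j k) * π (v k)) * A u up v := by
    conv_lhs => enter [2, i]; rw [Finset.sum_comm]
    rw [Finset.sum_comm]
    conv_lhs => enter [2, u, 2, i]; rw [Finset.sum_comm]
    conv_lhs => enter [2, u]; rw [Finset.sum_comm]
    conv_lhs => enter [2, u, 2, up, 2, i]; rw [Finset.sum_comm]
    conv_lhs => enter [2, u, 2, up]; rw [Finset.sum_comm]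
  -- Step 3: collapse the inner (i, j) sums
  have hinner : ∀ (u up : Fin C) (v : Fin K → Fin C),
      (∑ i, ∑ j : Fin K → Fin C,
        q u i * π u * (q up i * π up) * (∏ k, q (v k) (j k) * π (v k)) * A u up v)
      = (∑ i, q u i * q up i) * (π u * π up * (∏ k, π (v k)) * A u up v) := by
    intro u up v
    rw [Finset.sum_mul]
    refine Finset.sum_congr rfl fun i _ => ?_
    calc (∑ j : Fin K → Fin C,
          q u i * π u * (q up i * π up) * (∏ k, q (v k) (j k) * π (v k)) * A u up v)
        = ∑ j : Fin K → Fin C,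
          (∏ k, q (v k) (j k) * π (v k)) * (q u i * π u * (q up i * π up) * A u up v) :=
          Finset.sum_congr rfl fun j _ => by ring
      _ = (∏ k, π (v k)) * (q u i * π u * (q up i * π up) * A u up v) := by
          rw [← Finset.sum_mul, hJ v]
      _ = q u i * q up i * (π u * π up * (∏ k, π (v k)) * A u up v) := by ring
  -- diagonal and off-diagonal values of B
  have hBd : ∀ u : Fin C, (∑ i, q u i * q u i)
      = (1-γ)^2 + ((C:ℝ)-1) * (γ/((C:ℝ)-1))^2 := by
    intro u
    rw [← Finset.add_sum_erase _ _ (Finset.mem_univ u), hq_diag]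
    rw [Finset.sum_congr rfl (fun i hi => by
      rw [hq_off u i (Finset.ne_of_mem_erase hi).symm])]
    rw [Finset.sum_const, Finset.card_erase_of_mem (Finset.mem_univ u), Finset.card_univ,
      Fintype.card_fin, nsmul_eq_mul, hcast1]
    ring
  have hBo : ∀ u up : Fin C, u ≠ up → (∑ i, q u i * q up i)
      = 2*((1-γ)*(γ/((C:ℝ)-1))) + ((C:ℝ)-2) * (γ/((C:ℝ)-1))^2 := by
    intro u up hne
    rw [← Finset.add_sum_erase _ _ (Finset.mem_univ u)]
    have hup : up ∈ Finset.univ.erase u := Finset.mem_erase.2 ⟨hne.symm, Finset.mem_univ up⟩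
    rw [← Finset.add_sum_erase _ _ hup]
    rw [hq_diag u, hq_off up u hne.symm, hq_off u up hne, hq_diag up]
    rw [Finset.sum_congr rfl (fun i hi => by
      have hiu : i ≠ u := Finset.ne_of_mem_erase (Finset.mem_of_mem_erase hi)
      have hiup : i ≠ up := Finset.ne_of_mem_erase hi
      rw [hq_off u i hiu.symm, hq_off up i hiup.symm])]
    rw [Finset.sum_const, Finset.card_erase_of_mem hup,
      Finset.card_erase_of_mem (Finset.mem_univ u), Finset.card_univ, Fintype.card_fin,
      nsmul_eq_mul, hcast2]
    ring
  -- assemble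
  set s : ℝ := (C:ℝ) * γ / ((C:ℝ) - 1) with hs
  set α : ℝ := (1-γ)^2 + ((C:ℝ)-1) * (γ/((C:ℝ)-1))^2 with hα
  set β : ℝ := 2*((1-γ)*(γ/((C:ℝ)-1))) + ((C:ℝ)-2) * (γ/((C:ℝ)-1))^2 with hβ
  set W2 : Fin C → Fin C → ℝ :=
    fun u up => ∑ v : Fin K → Fin C, π u * π up * (∏ k, π (v k)) * A u up v with hW2
  have hmain : Rtil = (C:ℝ) * ∑ u, ∑ up, (∑ i, q u i * q up i) * W2 u up := by
    rw [hRtil', hswap]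
    congr 1
    refine Finset.sum_congr rfl fun u _ => Finset.sum_congr rfl fun up _ => ?_
    rw [hW2, Finset.mul_sum]
    exact Finset.sum_congr rfl fun v _ => hinner u up v
  have hsplit : ∀ u : Fin C, (∑ up, (∑ i, q u i * q up i) * W2 u up)
      = (α - β) * W2 u u + β * ∑ up, W2 u up := by
    intro u
    rw [← Finset.add_sum_erase _ _ (Finset.mem_univ u), hBd u]
    rw [Finset.sum_congr rfl (fun up hup => by
      rw [hBo u up (Finset.ne_of_mem_erase hup).symm])]
    rw [← Finset.mul_sum, Finset.sum_erase_eq_sub (Finset.mem_univ u)]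
    ring
  have hdiag : (∑ u, W2 u u) = (1/(C:ℝ)) * R := by
    rw [hR, Finset.mul_sum]
    refine Finset.sum_congr rfl fun u _ => ?_
    rw [hW2, Finset.mul_sum]
    refine Finset.sum_congr rfl fun v _ => ?_
    rw [hπ u]
    ring
  have hfull : (∑ u, ∑ up, W2 u up) = ΔR := by rw [hΔR]
  have : Rtil = (C:ℝ) * ((α - β) * ((1/(C:ℝ)) * R) + β * ΔR) := by
    rw [hmain, Finset.sum_congr rfl (fun u _ => hsplit u), Finset.sum_add_distrib,
      ← Finset.mul_sum, ← Finset.mul_sum, hdiag, hfull]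
  rw [this, hα, hβ, hs]
  field_simp
  ring
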